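/- Let K be a field with char K ≠ 2. The bigraded Hilbert series of K[V^m]^{S_2} (V = K², S_2 swapping coordinates, diagonal action on m copies) equals (Σ_{i=0}^{⌊m/2⌋} e_{2i}(t_1,...,t_m)) / Π_{j=1}^m (1−t_j)(1−t_j²), where e_i is the i-th elementary symmetric polynomial. -/

import Mathlib

open MvPolynomial

/-- `f` is invariant under `S_2` swapping the two coordinates (simultaneously in all `m`
pairs of variables). -/
def IsMultiSymm2 {K : Type*} [Field K] {m : ℕ} (f : MvPolynomial (Fin m × Fin 2) K) :
    Prop :=
  ∀ σ : Equiv.Perm (Fin 2), rename (fun p : Fin m × Fin 2 => (p.1, σ p.2)) f = f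

/-- The multigraded Hilbert series of `K[V^m]^{S_2}` (`V = K²`): the coefficient at the
multidegree `α` is the `K`-dimension of the space of invariants of multidegree `α`. -/
noncomputable def hilbertSeriesS2 (K : Type*) [Field K] (m : ℕ) :
    MvPowerSeries (Fin m) ℤ :=
  fun α : Fin m →₀ ℕ =>
    (Module.finrank K (Submodule.span K {f : MvPolynomial (Fin m × Fin 2) K |
      IsMultiSymm2 f ∧ ∀ d ∈ f.support, ∀ i : Fin m, (∑ j : Fin 2, d (i, j)) = α i}) : ℤ)

section Aux


open Finsupp

variable {m : ℕ}

lemma key_step (F : MvPowerSeries (Fin m) ℤ) (k : Fin m) (n : ℕ) (α : Fin m →₀ ℕ) :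
    MvPowerSeries.coeff α (F * (1 - MvPowerSeries.X k ^ n)) =
      MvPowerSeries.coeff α F -
        if Finsupp.single k n ≤ α then MvPowerSeries.coeff (α - Finsupp.single k n) F else 0 := by
  rw [mul_sub, mul_one, map_sub, MvPowerSeries.X_pow_eq, MvPowerSeries.coeff_mul_monomial]
  simp [mul_one]

noncomputable def Aser (m : ℕ) : MvPowerSeries (Fin m) ℤ := fun α => ∏ i, ((α i : ℤ) + 1)
noncomputable def Dser (m : ℕ) : MvPowerSeries (Fin m) ℤ := fun _ => 1
noncomputable def Bser (m : ℕ) : MvPowerSeries (Fin m) ℤ :=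
  fun α => if ∀ i, Even (α i) then 1 else 0

lemma coeff_apply' (F : MvPowerSeries (Fin m) ℤ) (α : Fin m →₀ ℕ) :
    MvPowerSeries.coeff α F = F α := rfl

lemma coeff_apply'' (F : (Fin m →₀ ℕ) → ℤ) (α : Fin m →₀ ℕ) :
    MvPowerSeries.coeff α (F : MvPowerSeries (Fin m) ℤ) = F α := rfl

lemma sub_single_apply (α : Fin m →₀ ℕ) (k i : Fin m) (n : ℕ) (h : i ≠ k) :
    (α - Finsupp.single k n) i = α i := by
  rw [Finsupp.tsub_apply, Finsupp.single_apply, if_neg (fun hh => h hh.symm)]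
  simp

lemma Aser_prod (s : Finset (Fin m)) :
    Aser m * ∏ j ∈ s, (1 - MvPowerSeries.X j) =
      (fun α => ∏ i ∈ sᶜ, ((α i : ℤ) + 1) : MvPowerSeries (Fin m) ℤ) := by
  classical
  induction s using Finset.induction_on with
  | empty =>
    rw [Finset.prod_empty, mul_one, Finset.compl_empty]
    rfl
  | @insert k s hk ih =>
    rw [Finset.prod_insert hk, mul_comm (1 - MvPowerSeries.X k), ← mul_assoc, ih]
    apply MvPowerSeries.ext
    intro α
    have hks := key_step (fun α => ∏ i ∈ sᶜ, ((α i : ℤ) + 1)) k 1 α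
    rw [pow_one] at hks
    rw [hks]
    simp only [coeff_apply', coeff_apply'']
    have hkc : k ∈ sᶜ := Finset.mem_compl.2 hk
    have hins : (insert k s)ᶜ = sᶜ.erase k := by
      ext x; simp [Finset.mem_compl, Finset.mem_erase, not_or, and_comm]
    have hsplit : ∏ i ∈ sᶜ, ((α i : ℤ) + 1)
        = ((α k : ℤ) + 1) * ∏ i ∈ sᶜ.erase k, ((α i : ℤ) + 1) := by
      rw [← Finset.prod_erase_mul _ _ hkc, mul_comm]
    have hprod2 : ∀ β : Fin m →₀ ℕ, (∀ i ∈ sᶜ.erase k, β i = α i) →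
        ∏ i ∈ sᶜ.erase k, ((β i : ℤ) + 1) = ∏ i ∈ sᶜ.erase k, ((α i : ℤ) + 1) :=
      fun β hβ => Finset.prod_congr rfl (fun i hi => by rw [hβ i hi])
    rw [hins]
    by_cases h1 : Finsupp.single k 1 ≤ α
    · rw [if_pos h1]
      have hk1 : 1 ≤ α k := Finsupp.single_le_iff.1 h1
      have key : ∏ i ∈ sᶜ, (((α - Finsupp.single k 1 : Fin m →₀ ℕ) i : ℤ) + 1)
          = ((α k : ℤ) - 1 + 1) * ∏ i ∈ sᶜ.erase k, ((α i : ℤ) + 1) := by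
        rw [← Finset.prod_erase_mul _ _ hkc, mul_comm]
        congr 1
        · rw [Finsupp.tsub_apply, Finsupp.single_eq_same]
          push_cast [hk1]
          ring
        · apply hprod2
          intro i hi
          rw [sub_single_apply α k i 1 (Finset.mem_erase.1 hi).1]
      rw [key, hsplit]
      ring
    · rw [if_neg h1, sub_zero]
      have hk0 : α k = 0 := by
        by_contra h
        exact h1 (Finsupp.single_le_iff.2 (Nat.one_le_iff_ne_zero.2 h))
      rw [hsplit, hk0]
      push_cast
      ring

lemma Dser_prod (s : Finset (Fin m)) :
    Dser m * ∏ j ∈ s, (1 - MvPowerSeries.X j) =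
      (fun α => if ∀ j ∈ s, α j = 0 then 1 else 0 : MvPowerSeries (Fin m) ℤ) := by
  classical
  induction s using Finset.induction_on with
  | empty =>
    rw [Finset.prod_empty, mul_one]
    funext α
    simp [Dser]
  | @insert k s hk ih =>
    rw [Finset.prod_insert hk, mul_comm (1 - MvPowerSeries.X k), ← mul_assoc, ih]
    apply MvPowerSeries.ext
    intro α
    have hks := key_step (fun α => if ∀ j ∈ s, α j = 0 then (1:ℤ) else 0) k 1 α
    rw [pow_one] at hks
    rw [hks]
    simp only [coeff_apply', coeff_apply'']
    by_cases h1 : Finsupp.single k 1 ≤ α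
    · rw [if_pos h1]
      have hk1 : 1 ≤ α k := Finsupp.single_le_iff.1 h1
      have hcond : (∀ j ∈ s, α j = 0) ↔
          (∀ j ∈ s, (α - Finsupp.single k 1 : Fin m →₀ ℕ) j = 0) := by
        apply forall₂_congr
        intro j hj
        rw [sub_single_apply α k j 1 (fun h => hk (h ▸ hj))]
      have hnot : ¬ (∀ j ∈ insert k s, α j = 0) := by
        intro h
        have := h k (Finset.mem_insert_self k s)
        omega
      rw [if_neg hnot]
      by_cases hc : ∀ j ∈ s, α j = 0
      · rw [if_pos hc, if_pos (hcond.1 hc), sub_self]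
      · rw [if_neg hc, if_neg (fun h => hc (hcond.2 h)), sub_self]
    · rw [if_neg h1, sub_zero]
      have hk0 : α k = 0 := by
        by_contra h
        exact h1 (Finsupp.single_le_iff.2 (Nat.one_le_iff_ne_zero.2 h))
      have : (∀ j ∈ s, α j = 0) ↔ (∀ j ∈ insert k s, α j = 0) := by
        constructor
        · intro h j hj
          rcases Finset.mem_insert.1 hj with rfl | hj
          · exact hk0
          · exact h j hj
        · intro h j hj
          exact h j (Finset.mem_insert_of_mem hj)
      by_cases hc : ∀ j ∈ s, α j = 0
      · rw [if_pos hc, if_pos (this.1 hc)]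
      · rw [if_neg hc, if_neg (fun h => hc (this.2 h))]

lemma Bser_prod (s : Finset (Fin m)) :
    Bser m * ∏ j ∈ s, (1 - MvPowerSeries.X j ^ 2) =
      (fun α => if (∀ j ∈ s, α j = 0) ∧ (∀ j ∈ sᶜ, Even (α j)) then 1 else 0 :
        MvPowerSeries (Fin m) ℤ) := by
  classical
  induction s using Finset.induction_on with
  | empty =>
    rw [Finset.prod_empty, mul_one]
    funext α
    simp [Bser, Finset.compl_empty]
  | @insert k s hk ih =>
    rw [Finset.prod_insert hk, mul_comm (1 - MvPowerSeries.X k ^ 2), ← mul_assoc, ih]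
    apply MvPowerSeries.ext
    intro α
    rw [key_step (fun α => if (∀ j ∈ s, α j = 0) ∧ (∀ j ∈ sᶜ, Even (α j)) then (1:ℤ) else 0) k 2 α]
    simp only [coeff_apply', coeff_apply'']
    have hins : ∀ j, j ∈ (insert k s)ᶜ ↔ j ∈ sᶜ ∧ j ≠ k := by
      intro j
      simp [Finset.mem_compl, not_or, and_comm]
    have hkc : k ∈ sᶜ := Finset.mem_compl.2 hk
    by_cases h1 : Finsupp.single k 2 ≤ α
    · rw [if_pos h1]
      have hk2 : 2 ≤ α k := Finsupp.single_le_iff.1 h1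
      have hnot : ¬ ((∀ j ∈ insert k s, α j = 0) ∧ (∀ j ∈ (insert k s)ᶜ, Even (α j))) := by
        rintro ⟨h, -⟩
        have := h k (Finset.mem_insert_self k s)
        omega
      rw [if_neg hnot]
      have hcond : ((∀ j ∈ s, α j = 0) ∧ (∀ j ∈ sᶜ, Even (α j))) ↔
          ((∀ j ∈ s, (α - Finsupp.single k 2 : Fin m →₀ ℕ) j = 0) ∧
            (∀ j ∈ sᶜ, Even ((α - Finsupp.single k 2 : Fin m →₀ ℕ) j))) := by
        constructor
        · rintro ⟨h0, he⟩
          refine ⟨fun j hj => ?_, fun j hj => ?_⟩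
          · rw [sub_single_apply α k j 2 (fun h => hk (h ▸ hj))]; exact h0 j hj
          · by_cases hjk : j = k
            · subst hjk
              rw [Finsupp.tsub_apply, Finsupp.single_eq_same]
              rw [Nat.even_sub hk2]
              simpa using he j hj
            · rw [sub_single_apply α k j 2 hjk]; exact he j hj
        · rintro ⟨h0, he⟩
          refine ⟨fun j hj => ?_, fun j hj => ?_⟩
          · have := h0 j hj
            rwa [sub_single_apply α k j 2 (fun h => hk (h ▸ hj))] at this
          · by_cases hjk : j = k
            · subst hjk
              have := he j hj
              rw [Finsupp.tsub_apply, Finsupp.single_eq_same, Nat.even_sub hk2] at this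
              simpa using this
            · have := he j hj
              rwa [sub_single_apply α k j 2 hjk] at this
      by_cases hc : (∀ j ∈ s, α j = 0) ∧ (∀ j ∈ sᶜ, Even (α j))
      · rw [if_pos hc, if_pos (hcond.1 hc), sub_self]
      · rw [if_neg hc, if_neg (fun h => hc (hcond.2 h)), sub_self]
    · rw [if_neg h1, sub_zero]
      have hk2 : α k < 2 := by
        by_contra h
        exact h1 (Finsupp.single_le_iff.2 (by omega))
      have hcond : ((∀ j ∈ s, α j = 0) ∧ (∀ j ∈ sᶜ, Even (α j))) ↔
          ((∀ j ∈ insert k s, α j = 0) ∧ (∀ j ∈ (insert k s)ᶜ, Even (α j))) := by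
        constructor
        · rintro ⟨h0, he⟩
          have hk0 : α k = 0 := by
            have := he k hkc
            rcases this with ⟨r, hr⟩
            omega
          refine ⟨fun j hj => ?_, fun j hj => he j ((hins j).1 hj).1⟩
          rcases Finset.mem_insert.1 hj with rfl | hj
          · exact hk0
          · exact h0 j hj
        · rintro ⟨h0, he⟩
          have hk0 : α k = 0 := h0 k (Finset.mem_insert_self k s)
          refine ⟨fun j hj => h0 j (Finset.mem_insert_of_mem hj), fun j hj => ?_⟩
          by_cases hjk : j = k
          · subst hjk; rw [hk0]; exact Even.zero
          · exact he j ((hins j).2 ⟨hj, hjk⟩)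
      by_cases hc : (∀ j ∈ s, α j = 0) ∧ (∀ j ∈ sᶜ, Even (α j))
      · rw [if_pos hc, if_pos (hcond.1 hc)]
      · rw [if_neg hc, if_neg (fun h => hc (hcond.2 h))]

lemma Aser_inv : Aser m * ∏ j : Fin m, (1 - MvPowerSeries.X j) = Dser m := by
  rw [Aser_prod Finset.univ]
  funext α
  rw [Finset.compl_univ, Finset.prod_empty]
  rfl

lemma Dser_inv : Dser m * ∏ j : Fin m, (1 - MvPowerSeries.X j) = 1 := by
  rw [Dser_prod Finset.univ]
  apply MvPowerSeries.ext
  intro α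
  classical
  rw [MvPowerSeries.coeff_one, coeff_apply'']
  by_cases h : α = 0
  · subst h; simp
  · rw [if_neg h, if_neg]
    intro hall
    exact h (Finsupp.ext (fun i => hall i (Finset.mem_univ i)))

lemma Bser_inv : Bser m * ∏ j : Fin m, (1 - MvPowerSeries.X j ^ 2) = 1 := by
  rw [Bser_prod Finset.univ]
  apply MvPowerSeries.ext
  intro α
  classical
  rw [MvPowerSeries.coeff_one, coeff_apply'']
  by_cases h : α = 0
  · subst h; simp
  · rw [if_neg h, if_neg]
    rintro ⟨hall, -⟩
    exact h (Finsupp.ext (fun i => hall i (Finset.mem_univ i)))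

lemma prod_factored :
    (∏ j : Fin m, ((1 - MvPowerSeries.X (R := ℤ) j) * (1 - MvPowerSeries.X j ^ 2))) =
      ((∏ j : Fin m, (1 - MvPowerSeries.X (R := ℤ) j)) *
        ∏ j : Fin m, (1 - MvPowerSeries.X (R := ℤ) j)) *
      ∏ j : Fin m, (1 + MvPowerSeries.X (R := ℤ) j) := by
  rw [← Finset.prod_mul_distrib, ← Finset.prod_mul_distrib]
  apply Finset.prod_congr rfl
  intro j _
  ring

lemma Aser_main :
    Aser m * ∏ j : Fin m, ((1 - MvPowerSeries.X (R := ℤ) j) * (1 - MvPowerSeries.X j ^ 2)) =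
      ∏ j : Fin m, (1 + MvPowerSeries.X (R := ℤ) j) := by
  rw [prod_factored]
  calc Aser m * (((∏ j : Fin m, (1 - MvPowerSeries.X (R := ℤ) j)) *
        ∏ j : Fin m, (1 - MvPowerSeries.X (R := ℤ) j)) *
      ∏ j : Fin m, (1 + MvPowerSeries.X (R := ℤ) j))
      = ((Aser m * ∏ j : Fin m, (1 - MvPowerSeries.X (R := ℤ) j)) *
          ∏ j : Fin m, (1 - MvPowerSeries.X (R := ℤ) j)) *
        ∏ j : Fin m, (1 + MvPowerSeries.X (R := ℤ) j) := by ring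
    _ = _ := by rw [Aser_inv, Dser_inv, one_mul]

lemma Bser_main :
    Bser m * ∏ j : Fin m, ((1 - MvPowerSeries.X (R := ℤ) j) * (1 - MvPowerSeries.X j ^ 2)) =
      ∏ j : Fin m, (1 - MvPowerSeries.X (R := ℤ) j) := by
  have : ∀ j : Fin m, (1 - MvPowerSeries.X (R := ℤ) j) * (1 - MvPowerSeries.X j ^ 2)
      = (1 - MvPowerSeries.X j ^ 2) * (1 - MvPowerSeries.X j) := fun j => mul_comm _ _
  rw [Finset.prod_congr rfl (fun j _ => this j), Finset.prod_mul_distrib, ← mul_assoc,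
    Bser_inv, one_mul]

lemma sum_prod_identity :
    (∏ j : Fin m, (1 + MvPowerSeries.X (R := ℤ) j)) +
      ∏ j : Fin m, (1 - MvPowerSeries.X (R := ℤ) j) =
    2 * ∑ i ∈ Finset.range (m / 2 + 1),
        ∑ S ∈ Finset.univ.powersetCard (2 * i), ∏ j ∈ S, MvPowerSeries.X j := by
  classical
  have h1 : (∏ j : Fin m, (1 + MvPowerSeries.X (R := ℤ) j)) =
      ∑ t ∈ (Finset.univ : Finset (Fin m)).powerset, ∏ j ∈ t, MvPowerSeries.X (R := ℤ) j := by
    have := Finset.prod_add (fun j : Fin m => MvPowerSeries.X (R := ℤ) j)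
      (fun _ => (1 : MvPowerSeries (Fin m) ℤ)) Finset.univ
    simp only [Finset.prod_const_one, mul_one] at this
    rw [← this]
    exact Finset.prod_congr rfl (fun j _ => add_comm _ _)
  have h2 : (∏ j : Fin m, (1 - MvPowerSeries.X (R := ℤ) j)) =
      ∑ t ∈ (Finset.univ : Finset (Fin m)).powerset,
        (-1 : MvPowerSeries (Fin m) ℤ) ^ t.card * ∏ j ∈ t, MvPowerSeries.X (R := ℤ) j := by
    have := Finset.prod_add (fun j : Fin m => -MvPowerSeries.X (R := ℤ) j)
      (fun _ => (1 : MvPowerSeries (Fin m) ℤ)) Finset.univ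
    simp only [Finset.prod_const_one, mul_one] at this
    have hneg : ∀ t : Finset (Fin m), (∏ j ∈ t, -MvPowerSeries.X (R := ℤ) j) =
        (-1 : MvPowerSeries (Fin m) ℤ) ^ t.card * ∏ j ∈ t, MvPowerSeries.X (R := ℤ) j := by
      intro t
      rw [← Finset.prod_const, ← Finset.prod_mul_distrib]
      exact Finset.prod_congr rfl (fun j _ => (neg_one_mul _).symm)
    calc (∏ j : Fin m, (1 - MvPowerSeries.X (R := ℤ) j))
        = ∏ j : Fin m, (-MvPowerSeries.X (R := ℤ) j + 1) := by
          exact Finset.prod_congr rfl (fun j _ => by ring)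
      _ = ∑ t ∈ (Finset.univ : Finset (Fin m)).powerset, ∏ j ∈ t, -MvPowerSeries.X (R := ℤ) j :=
          this
      _ = _ := Finset.sum_congr rfl (fun t _ => hneg t)
  rw [h1, h2, ← Finset.sum_add_distrib]
  have h3 : ∀ t : Finset (Fin m),
      ((∏ j ∈ t, MvPowerSeries.X (R := ℤ) j) +
        (-1 : MvPowerSeries (Fin m) ℤ) ^ t.card * ∏ j ∈ t, MvPowerSeries.X (R := ℤ) j) =
      if Even t.card then 2 * ∏ j ∈ t, MvPowerSeries.X (R := ℤ) j else 0 := by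
    intro t
    by_cases h : Even t.card
    · rw [if_pos h, h.neg_one_pow]; ring
    · rw [if_neg h, (Nat.not_even_iff_odd.1 h).neg_one_pow]; ring
  rw [Finset.sum_congr rfl (fun t _ => h3 t), ← Finset.sum_filter]
  -- now reindex
  have h4 : (Finset.univ : Finset (Fin m)).powerset.filter (fun t => Even t.card) =
      (Finset.range (m + 1)).biUnion (fun k => if Even k then
        (Finset.univ : Finset (Fin m)).powersetCard k else ∅) := by
    ext t
    simp only [Finset.mem_filter, Finset.mem_powerset, Finset.mem_biUnion, Finset.mem_range]
    constructor
    · rintro ⟨hsub, hev⟩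
      refine ⟨t.card, ?_, ?_⟩
      · have := Finset.card_le_card hsub
        simpa [Finset.card_univ] using Nat.lt_succ_of_le this
      · rw [if_pos hev]
        exact Finset.mem_powersetCard.2 ⟨hsub, rfl⟩
    · rintro ⟨k, hk, ht⟩
      by_cases hev : Even k
      · rw [if_pos hev] at ht
        obtain ⟨hsub, hcard⟩ := Finset.mem_powersetCard.1 ht
        exact ⟨hsub, hcard ▸ hev⟩
      · rw [if_neg hev] at ht
        exact absurd ht (Finset.notMem_empty t)
  rw [h4, Finset.sum_biUnion]
  · have h5 : ∀ k ∈ Finset.range (m + 1),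
        (∑ t ∈ (if Even k then (Finset.univ : Finset (Fin m)).powersetCard k else ∅),
          2 * ∏ j ∈ t, MvPowerSeries.X (R := ℤ) j) =
        if Even k then
          (∑ t ∈ (Finset.univ : Finset (Fin m)).powersetCard k,
            2 * ∏ j ∈ t, MvPowerSeries.X (R := ℤ) j) else 0 := by
      intro k _
      by_cases hev : Even k
      · rw [if_pos hev, if_pos hev]
      · rw [if_neg hev, if_neg hev, Finset.sum_empty]
    rw [Finset.sum_congr rfl h5, ← Finset.sum_filter, Finset.mul_sum]
    refine Finset.sum_bij' (fun k _ => k / 2) (fun i _ => 2 * i) ?g1 ?g2 ?g3 ?g4 ?g5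
    case g1 =>
      intro k hk
      simp only [Finset.mem_filter, Finset.mem_range, Nat.even_iff] at hk
      simp only [Finset.mem_range]
      omega
    case g2 =>
      intro i hi
      simp only [Finset.mem_range] at hi
      simp only [Finset.mem_filter, Finset.mem_range, Nat.even_iff]
      omega
    case g3 =>
      intro k hk
      simp only [Finset.mem_filter, Finset.mem_range, Nat.even_iff] at hk
      omega
    case g4 =>
      intro i _
      omega
    case g5 =>
      intro k hk
      simp only [Finset.mem_filter, Finset.mem_range, Nat.even_iff] at hk
      have h2k : 2 * (k / 2) = k := by omega
      rw [h2k, Finset.mul_sum]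
  · intro a _ b _ hab
    simp only [Function.onFun]
    by_cases ha : Even a
    · by_cases hb : Even b
      · rw [if_pos ha, if_pos hb]
        exact Finset.disjoint_left.2 (fun t hta htb =>
          hab ((Finset.mem_powersetCard.1 hta).2.symm.trans (Finset.mem_powersetCard.1 htb).2))
      · rw [if_neg hb]; exact Finset.disjoint_empty_right _
    · rw [if_neg ha]; exact Finset.disjoint_empty_left _


def eSw (m : ℕ) : (Fin m × Fin 2) ≃ (Fin m × Fin 2) :=
  (Equiv.refl (Fin m)).prodCongr (Equiv.swap 0 1)

def tau {m : ℕ} (d : Fin m × Fin 2 →₀ ℕ) : Fin m × Fin 2 →₀ ℕ :=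
  Finsupp.equivMapDomain (eSw m) d

lemma eSw_symm {m : ℕ} : (eSw m).symm = eSw m := by
  apply Equiv.ext
  intro p
  show ((Equiv.refl (Fin m)).symm p.1, (Equiv.swap 0 1).symm p.2) = _
  rw [Equiv.symm_swap]
  rfl

lemma tau_apply {m : ℕ} (d : Fin m × Fin 2 →₀ ℕ) (p : Fin m × Fin 2) :
    tau d p = d (p.1, Equiv.swap 0 1 p.2) := by
  show d ((eSw m).symm p) = _
  rw [eSw_symm]
  rfl

lemma tau_tau {m : ℕ} (d : Fin m × Fin 2 →₀ ℕ) : tau (tau d) = d := by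
  ext p
  rw [tau_apply, tau_apply]
  simp [Equiv.swap_apply_self]

lemma tau_zero_one {m : ℕ} (d : Fin m × Fin 2 →₀ ℕ) (i : Fin m) :
    tau d (i, 0) = d (i, 1) ∧ tau d (i, 1) = d (i, 0) := by
  constructor
  · rw [tau_apply]; simp
  · rw [tau_apply]; simp

/-- The degree condition. -/
def degOK {m : ℕ} (α : Fin m →₀ ℕ) (d : Fin m × Fin 2 →₀ ℕ) : Prop :=
  ∀ i, ∑ j : Fin 2, d (i, j) = α i

lemma degOK_iff {m : ℕ} (α : Fin m →₀ ℕ) (d : Fin m × Fin 2 →₀ ℕ) :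
    degOK α d ↔ ∀ i, d (i, 0) + d (i, 1) = α i := by
  unfold degOK
  constructor <;> intro h i <;> have := h i <;> rwa [Fin.sum_univ_two] at * <;> assumption

open scoped Classical in
noncomputable def Mfin {m : ℕ} (α : Fin m →₀ ℕ) : Finset (Fin m × Fin 2 →₀ ℕ) :=
  (Finset.Iic (Finsupp.equivFunOnFinite.symm (fun p : Fin m × Fin 2 => α p.1))).filter
    (fun d => degOK α d)

lemma mem_Mfin {m : ℕ} (α : Fin m →₀ ℕ) (d : Fin m × Fin 2 →₀ ℕ) :
    d ∈ Mfin α ↔ degOK α d := by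
  classical
  unfold Mfin
  rw [Finset.mem_filter]
  constructor
  · exact fun h => h.2
  · intro h
    refine ⟨Finset.mem_Iic.2 ?_, h⟩
    intro p
    have hd := (degOK_iff α d).1 h p.1
    have hb : (Finsupp.equivFunOnFinite.symm (fun p : Fin m × Fin 2 => α p.1)) p = α p.1 := rfl
    obtain ⟨i, j⟩ := p
    have hd2 := (degOK_iff α d).1 h i
    fin_cases j
    · show d (i, 0) ≤ α i
      omega
    · show d (i, 1) ≤ α i
      omega

lemma tau_mem_Mfin {m : ℕ} (α : Fin m →₀ ℕ) (d : Fin m × Fin 2 →₀ ℕ) (hd : d ∈ Mfin α) :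
    tau d ∈ Mfin α := by
  rw [mem_Mfin] at *
  rw [degOK_iff] at *
  intro i
  obtain ⟨h0, h1⟩ := tau_zero_one d i
  rw [h0, h1, add_comm]
  exact hd i

lemma card_Mfin {m : ℕ} (α : Fin m →₀ ℕ) :
    (Mfin α).card = ∏ i : Fin m, (α i + 1) := by
  classical
  rw [show ∏ i : Fin m, (α i + 1) = (Fintype.piFinset (fun i : Fin m => Finset.range (α i + 1))).card from by simp]
  · apply Finset.card_bij' (fun d _ => fun i => d (i, 0))
      (fun b _ => Finsupp.equivFunOnFinite.symm
        (fun p : Fin m × Fin 2 => if p.2 = 0 then b p.1 else α p.1 - b p.1))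
    · intro d hd
      rw [mem_Mfin, degOK_iff] at hd
      rw [Fintype.mem_piFinset]
      intro i
      rw [Finset.mem_range]
      have := hd i
      omega
    · intro b hb
      rw [Fintype.mem_piFinset] at hb
      rw [mem_Mfin, degOK_iff]
      intro i
      have hbi : b i ≤ α i := by
        have := hb i
        rw [Finset.mem_range] at this
        omega
      show (if (0 : Fin 2) = 0 then b i else α i - b i) +
        (if (1 : Fin 2) = 0 then b i else α i - b i) = α i
      rw [if_pos rfl, if_neg (by decide)]
      omega
    · intro d hd
      rw [mem_Mfin, degOK_iff] at hd
      ext p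
      obtain ⟨i, j⟩ := p
      have := hd i
      fin_cases j
      · show (if (0 : Fin 2) = 0 then d (i, 0) else α i - d (i, 0)) = d (i, 0)
        rw [if_pos rfl]
      · show (if (1 : Fin 2) = 0 then d (i, 0) else α i - d (i, 0)) = d (i, 1)
        rw [if_neg (by decide)]
        omega
    · intro b _
      funext i
      show (if (0 : Fin 2) = 0 then b i else α i - b i) = b i
      rw [if_pos rfl]

lemma card_Mfin_fixed {m : ℕ} (α : Fin m →₀ ℕ) :
    ((Mfin α).filter (fun d => tau d = d)).card = if ∀ i, Even (α i) then 1 else 0 := by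
  classical
  by_cases h : ∀ i, Even (α i)
  · rw [if_pos h]
    rw [Finset.card_eq_one]
    refine ⟨Finsupp.equivFunOnFinite.symm (fun p : Fin m × Fin 2 => α p.1 / 2), ?_⟩
    ext d
    rw [Finset.mem_filter, Finset.mem_singleton, mem_Mfin, degOK_iff]
    constructor
    · rintro ⟨hdeg, hfix⟩
      have hkey : ∀ i : Fin m, d (i, 0) = d (i, 1) := by
        intro i
        have := congrArg (fun f => f (i, 0) : (Fin m × Fin 2 →₀ ℕ) → ℕ) hfix
        simpa [(tau_zero_one d i).1] using this.symm
      ext p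
      obtain ⟨i, j⟩ := p
      have hd := hdeg i
      have hk := hkey i
      obtain ⟨r, hr⟩ := h i
      fin_cases j
      · show d (i, 0) = α i / 2
        omega
      · show d (i, 1) = α i / 2
        omega
    · rintro rfl
      constructor
      · intro i
        show α i / 2 + α i / 2 = α i
        obtain ⟨r, hr⟩ := h i
        omega
      · ext p
        obtain ⟨i, j⟩ := p
        rw [tau_apply]
        rfl
  · rw [if_neg h]
    rw [Finset.card_eq_zero]
    rw [Finset.eq_empty_iff_forall_notMem]
    intro d hd
    rw [Finset.mem_filter, mem_Mfin, degOK_iff] at hd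
    obtain ⟨hdeg, hfix⟩ := hd
    apply h
    intro i
    have hkey : d (i, 0) = d (i, 1) := by
      have := congrArg (fun f => f (i, 0) : (Fin m × Fin 2 →₀ ℕ) → ℕ) hfix
      simpa [(tau_zero_one d i).1] using this.symm
    have := hdeg i
    exact ⟨d (i, 0), by omega⟩

noncomputable def enc (m : ℕ) : (Fin m × Fin 2 →₀ ℕ) → ℕ :=
  (Countable.exists_injective_nat (Fin m × Fin 2 →₀ ℕ)).choose

lemma enc_inj (m : ℕ) : Function.Injective (enc m) :=
  (Countable.exists_injective_nat (Fin m × Fin 2 →₀ ℕ)).choose_spec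

open scoped Classical in
noncomputable def Rfin {m : ℕ} (α : Fin m →₀ ℕ) : Finset (Fin m × Fin 2 →₀ ℕ) :=
  (Mfin α).filter (fun d => enc m d ≤ enc m (tau d))

lemma two_card_Rfin {m : ℕ} (α : Fin m →₀ ℕ) :
    2 * (Rfin α).card = (Mfin α).card + if ∀ i, Even (α i) then 1 else 0 := by
  classical
  set R' : Finset (Fin m × Fin 2 →₀ ℕ) :=
    (Mfin α).filter (fun d => enc m (tau d) ≤ enc m d) with hR'
  have hcard : (Rfin α).card = R'.card := by
    apply Finset.card_bij' (fun d _ => tau d) (fun d _ => tau d)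
    · intro d hd
      rw [Rfin, Finset.mem_filter] at hd
      rw [hR', Finset.mem_filter]
      exact ⟨tau_mem_Mfin α d hd.1, by rw [tau_tau]; exact hd.2⟩
    · intro d hd
      rw [hR', Finset.mem_filter] at hd
      rw [Rfin, Finset.mem_filter]
      exact ⟨tau_mem_Mfin α d hd.1, by rw [tau_tau]; exact hd.2⟩
    · intro d _; exact tau_tau d
    · intro d _; exact tau_tau d
  have hunion : Rfin α ∪ R' = Mfin α := by
    ext d
    rw [Finset.mem_union, Rfin, hR', Finset.mem_filter, Finset.mem_filter]
    constructor
    · rintro (h | h) <;> exact h.1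
    · intro h
      rcases le_total (enc m d) (enc m (tau d)) with hle | hle
      · exact Or.inl ⟨h, hle⟩
      · exact Or.inr ⟨h, hle⟩
  have hinter : Rfin α ∩ R' = (Mfin α).filter (fun d => tau d = d) := by
    ext d
    rw [Finset.mem_inter, Rfin, hR', Finset.mem_filter, Finset.mem_filter, Finset.mem_filter]
    constructor
    · rintro ⟨⟨hm, h1⟩, -, h2⟩
      exact ⟨hm, enc_inj m (le_antisymm h2 h1)⟩
    · rintro ⟨hm, hfix⟩
      rw [hfix]
      exact ⟨⟨hm, le_rfl⟩, hm, le_rfl⟩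
  have := Finset.card_union_add_card_inter (Rfin α) R'
  rw [hunion, hinter, card_Mfin_fixed] at this
  omega

open MvPolynomial

lemma perm_fin_two (σ : Equiv.Perm (Fin 2)) : σ = 1 ∨ σ = Equiv.swap 0 1 := by
  revert σ
  decide

variable {K : Type*} [Field K] {m : ℕ}

noncomputable def bvec (K : Type*) [Field K] {m : ℕ} (d : Fin m × Fin 2 →₀ ℕ) :
    MvPolynomial (Fin m × Fin 2) K :=
  if tau d = d then monomial d 1 else monomial d 1 + monomial (tau d) 1

lemma swapFun_eq_eSw :
    (fun p : Fin m × Fin 2 => (p.1, Equiv.swap 0 1 p.2)) = ⇑(eSw m) := rfl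

lemma mapDomain_eSw (d : Fin m × Fin 2 →₀ ℕ) :
    Finsupp.mapDomain (fun p : Fin m × Fin 2 => (p.1, Equiv.swap 0 1 p.2)) d = tau d := by
  rw [swapFun_eq_eSw, ← Finsupp.equivMapDomain_eq_mapDomain]
  rfl

lemma rename_swap_monomial (d : Fin m × Fin 2 →₀ ℕ) :
    rename (fun p : Fin m × Fin 2 => (p.1, Equiv.swap 0 1 p.2)) (monomial d (1 : K)) =
      monomial (tau d) 1 := by
  rw [rename_monomial, mapDomain_eSw]

lemma bvec_symm (d : Fin m × Fin 2 →₀ ℕ) : IsMultiSymm2 (bvec K d) := by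
  intro σ
  rcases perm_fin_two σ with rfl | rfl
  · have hid : (fun p : Fin m × Fin 2 => (p.1, (1 : Equiv.Perm (Fin 2)) p.2)) = id := rfl
    rw [hid, rename_id, AlgHom.id_apply]
  · unfold bvec
    split_ifs with h
    · rw [rename_swap_monomial, h]
    · rw [map_add, rename_swap_monomial, rename_swap_monomial, tau_tau, add_comm]

lemma coeff_tau_of_symm {f : MvPolynomial (Fin m × Fin 2) K} (hf : IsMultiSymm2 f)
    (e : Fin m × Fin 2 →₀ ℕ) : coeff (tau e) f = coeff e f := by
  have hinj : Function.Injective (fun p : Fin m × Fin 2 => (p.1, Equiv.swap 0 1 p.2)) := by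
    rw [swapFun_eq_eSw]
    exact (eSw m).injective
  have := coeff_rename_mapDomain _ hinj f e
  rw [hf (Equiv.swap 0 1), mapDomain_eSw] at this
  exact this

lemma bvec_support (d : Fin m × Fin 2 →₀ ℕ) (e : Fin m × Fin 2 →₀ ℕ)
    (he : e ∈ (bvec K d).support) : e = d ∨ e = tau d := by
  classical
  unfold bvec at he
  split_ifs at he with h
  · rw [support_monomial, if_neg (one_ne_zero (α := K))] at he
    exact Or.inl (Finset.mem_singleton.1 he)
  · have := MvPolynomial.support_add he
    rw [Finset.mem_union, support_monomial, support_monomial,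
      if_neg (one_ne_zero (α := K)), if_neg (one_ne_zero (α := K))] at this
    rcases this with h1 | h1
    · exact Or.inl (Finset.mem_singleton.1 h1)
    · exact Or.inr (Finset.mem_singleton.1 h1)

lemma coeff_bvec_self (d : Fin m × Fin 2 →₀ ℕ) : coeff d (bvec K d) = 1 := by
  classical
  unfold bvec
  split_ifs with h
  · rw [MvPolynomial.coeff_monomial, if_pos rfl]
  · rw [coeff_add, MvPolynomial.coeff_monomial, MvPolynomial.coeff_monomial, if_pos rfl, if_neg h, add_zero]

lemma tau_ne_of_mem_Rfin {α : Fin m →₀ ℕ} {d d' : Fin m × Fin 2 →₀ ℕ}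
    (hd : d ∈ Rfin α) (hd' : d' ∈ Rfin α) (hne : d ≠ d') : d ≠ tau d' := by
  intro h
  rw [Rfin, Finset.mem_filter] at hd hd'
  have h1 : enc m d' ≤ enc m d := h ▸ hd'.2
  have htd : tau d = d' := by rw [h, tau_tau]
  have h2 : enc m d ≤ enc m d' := htd ▸ hd.2
  exact hne (enc_inj m (le_antisymm h2 h1))

lemma coeff_bvec_ne {α : Fin m →₀ ℕ} {d d' : Fin m × Fin 2 →₀ ℕ}
    (hd : d ∈ Rfin α) (hd' : d' ∈ Rfin α) (hne : d ≠ d') : coeff d (bvec K d') = 0 := by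
  classical
  have h2 : d ≠ tau d' := tau_ne_of_mem_Rfin hd hd' hne
  unfold bvec
  split_ifs with h
  · rw [MvPolynomial.coeff_monomial, if_neg (fun hh => hne hh.symm)]
  · rw [coeff_add, MvPolynomial.coeff_monomial, MvPolynomial.coeff_monomial, if_neg (fun hh => hne hh.symm),
      if_neg (fun hh => h2 hh.symm), add_zero]

lemma bvec_mem_set {α : Fin m →₀ ℕ} {d : Fin m × Fin 2 →₀ ℕ} (hd : d ∈ Mfin α) :
    (bvec K d) ∈ {f : MvPolynomial (Fin m × Fin 2) K |
      IsMultiSymm2 f ∧ ∀ e ∈ f.support, ∀ i : Fin m, (∑ j : Fin 2, e (i, j)) = α i} := by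
  refine ⟨bvec_symm d, ?_⟩
  intro e he i
  rcases bvec_support d e he with rfl | rfl
  · exact (mem_Mfin α e).1 hd i
  · exact (mem_Mfin α _).1 (tau_mem_Mfin α _ hd) i

lemma decomp {α : Fin m →₀ ℕ} {f : MvPolynomial (Fin m × Fin 2) K}
    (hsym : IsMultiSymm2 f)
    (hdeg : ∀ e ∈ f.support, ∀ i : Fin m, (∑ j : Fin 2, e (i, j)) = α i) :
    f = ∑ d ∈ Rfin α, (coeff d f) • bvec K d := by
  classical
  apply MvPolynomial.ext
  intro e
  rw [MvPolynomial.coeff_sum]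
  simp only [MvPolynomial.coeff_smul, smul_eq_mul]
  have hzero : ∀ e' : Fin m × Fin 2 →₀ ℕ, ¬ degOK α e' → coeff e' f = 0 := by
    intro e' h
    by_contra hc
    exact h (fun i => hdeg e' (MvPolynomial.mem_support_iff.2 hc) i)
  by_cases hdOK : degOK α e
  · have heM : e ∈ Mfin α := (mem_Mfin α e).2 hdOK
    by_cases hfix : tau e = e
    · have heR : e ∈ Rfin α := by
        rw [Rfin, Finset.mem_filter]
        exact ⟨heM, by rw [hfix]⟩
      rw [Finset.sum_eq_single_of_mem e heR
        (fun d hd hne => by rw [coeff_bvec_ne heR hd (fun hh => hne hh.symm), mul_zero])]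
      rw [coeff_bvec_self, mul_one]
    · by_cases hr : enc m e ≤ enc m (tau e)
      · have heR : e ∈ Rfin α := by
          rw [Rfin, Finset.mem_filter]; exact ⟨heM, hr⟩
        rw [Finset.sum_eq_single_of_mem e heR
          (fun d hd hne => by rw [coeff_bvec_ne heR hd (fun hh => hne hh.symm), mul_zero])]
        rw [coeff_bvec_self, mul_one]
      · have htR : tau e ∈ Rfin α := by
          rw [Rfin, Finset.mem_filter]
          refine ⟨tau_mem_Mfin α e heM, ?_⟩
          rw [tau_tau]
          exact le_of_not_ge hr
        rw [Finset.sum_eq_single_of_mem (tau e) htR]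
        · have hb : coeff e (bvec K (tau e)) = 1 := by
            unfold bvec
            rw [if_neg (by rw [tau_tau]; exact fun hh => hfix hh.symm)]
            rw [coeff_add, MvPolynomial.coeff_monomial, MvPolynomial.coeff_monomial,
              if_neg (fun hh => hfix hh), tau_tau, if_pos rfl, zero_add]
          rw [hb, mul_one, coeff_tau_of_symm hsym]
        · intro d hd hne
          have hed : e ≠ d := by
            rintro rfl
            rw [Rfin, Finset.mem_filter] at hd
            exact hr hd.2
          have hetd : e ≠ tau d := by
            intro hh
            apply hne
            rw [hh, tau_tau]
          have : coeff e (bvec K d) = 0 := by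
            unfold bvec
            split_ifs with h
            · rw [MvPolynomial.coeff_monomial, if_neg (fun hh => hed hh.symm)]
            · rw [coeff_add, MvPolynomial.coeff_monomial, MvPolynomial.coeff_monomial,
                if_neg (fun hh => hed hh.symm), if_neg (fun hh => hetd hh.symm), add_zero]
          rw [this, mul_zero]
  · rw [hzero e hdOK]
    apply (Finset.sum_eq_zero ?_).symm
    intro d hd
    rw [Rfin, Finset.mem_filter] at hd
    have hdM := hd.1
    have h1 : e ≠ d := by
      rintro rfl
      exact hdOK ((mem_Mfin α e).1 hdM)
    have h2 : e ≠ tau d := by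
      rintro rfl
      exact hdOK ((mem_Mfin α _).1 (tau_mem_Mfin α d hdM))
    have : coeff e (bvec K d) = 0 := by
      unfold bvec
      split_ifs with h
      · rw [MvPolynomial.coeff_monomial, if_neg (fun hh => h1 hh.symm)]
      · rw [coeff_add, MvPolynomial.coeff_monomial, MvPolynomial.coeff_monomial,
          if_neg (fun hh => h1 hh.symm), if_neg (fun hh => h2 hh.symm), add_zero]
    rw [this, mul_zero]

lemma bvec_linIndep (α : Fin m →₀ ℕ) :
    LinearIndependent K (fun d : {x // x ∈ Rfin α} => bvec K (d : Fin m × Fin 2 →₀ ℕ)) := by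
  rw [linearIndependent_iff']
  intro s g hsum d hd
  have := congrArg (coeff (d : Fin m × Fin 2 →₀ ℕ)) hsum
  rw [MvPolynomial.coeff_sum] at this
  simp only [MvPolynomial.coeff_smul, smul_eq_mul, MvPolynomial.coeff_zero] at this
  rw [Finset.sum_eq_single_of_mem d hd] at this
  · rwa [coeff_bvec_self, mul_one] at this
  · intro d' _ hne
    rw [coeff_bvec_ne d.2 d'.2 (fun hh => hne (Subtype.ext hh.symm)), mul_zero]

lemma span_eq (α : Fin m →₀ ℕ) :
    Submodule.span K {f : MvPolynomial (Fin m × Fin 2) K |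
      IsMultiSymm2 f ∧ ∀ e ∈ f.support, ∀ i : Fin m, (∑ j : Fin 2, e (i, j)) = α i} =
    Submodule.span K (Set.range
      (fun d : {x // x ∈ Rfin α} => bvec K (d : Fin m × Fin 2 →₀ ℕ))) := by
  apply le_antisymm
  · rw [Submodule.span_le]
    rintro f ⟨hsym, hdeg⟩
    rw [SetLike.mem_coe, decomp hsym hdeg]
    apply Submodule.sum_mem
    intro d hd
    exact Submodule.smul_mem _ _ (Submodule.subset_span ⟨⟨d, hd⟩, rfl⟩)
  · rw [Submodule.span_le]
    rintro f ⟨d, rfl⟩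
    have hdM : (d : Fin m × Fin 2 →₀ ℕ) ∈ Mfin α := by
      have hh := d.2
      unfold Rfin at hh
      exact (Finset.mem_filter.1 hh).1
    exact Submodule.subset_span (bvec_mem_set hdM)

lemma finrank_eq (α : Fin m →₀ ℕ) :
    Module.finrank K (Submodule.span K {f : MvPolynomial (Fin m × Fin 2) K |
      IsMultiSymm2 f ∧ ∀ e ∈ f.support, ∀ i : Fin m, (∑ j : Fin 2, e (i, j)) = α i}) =
    (Rfin α).card := by
  rw [span_eq, finrank_span_eq_card (bvec_linIndep α), Fintype.card_coe]


lemma coeff_hilbert {K : Type*} [Field K] {m : ℕ} (α : Fin m →₀ ℕ) :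
    hilbertSeriesS2 K m α = ((Rfin α).card : ℤ) := by
  show ((Module.finrank K (Submodule.span K {f : MvPolynomial (Fin m × Fin 2) K |
      IsMultiSymm2 f ∧ ∀ d ∈ f.support, ∀ i : Fin m, (∑ j : Fin 2, d (i, j)) = α i})) : ℤ)
    = ((Rfin α).card : ℤ)
  exact_mod_cast congrArg (Nat.cast (R := ℤ)) (finrank_eq α)

lemma hAB (K : Type*) [Field K] (m : ℕ) :
    Aser m + Bser m = hilbertSeriesS2 K m + hilbertSeriesS2 K m := by
  apply MvPowerSeries.ext
  intro α
  have hg : (MvPowerSeries.coeff α) (Aser m + Bser m) = Aser m α + Bser m α := rfl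
  have hg2 : (MvPowerSeries.coeff α) (hilbertSeriesS2 K m + hilbertSeriesS2 K m)
      = hilbertSeriesS2 K m α + hilbertSeriesS2 K m α := rfl
  rw [hg, hg2, coeff_hilbert α]
  show (∏ i, ((α i : ℤ) + 1)) + (if ∀ i, Even (α i) then (1:ℤ) else 0)
      = ((Rfin α).card : ℤ) + ((Rfin α).card : ℤ)
  have h := two_card_Rfin α
  rw [card_Mfin] at h
  have hprod : ((∏ i : Fin m, (α i + 1) : ℕ) : ℤ) = ∏ i : Fin m, ((α i : ℤ) + 1) := by
    push_cast
    rfl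
  by_cases hev : ∀ i, Even (α i)
  · rw [if_pos hev] at h ⊢
    have := congrArg (Nat.cast (R := ℤ)) h
    push_cast at this
    linarith
  · rw [if_neg hev] at h ⊢
    have := congrArg (Nat.cast (R := ℤ)) h
    push_cast at this
    linarith

end Aux

/-- For `char K ≠ 2`, the multigraded Hilbert series of `K[V^m]^{S_2}` equals
`(∑_{i=0}^{⌊m/2⌋} e_{2i}(t₁, …, t_m)) / ∏_{j=1}^m (1 − t_j)(1 − t_j²)`. -/
theorem hilbert_series_S2
    (K : Type*) [Field K] (h2 : (2 : K) ≠ 0) (m : ℕ) :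
    hilbertSeriesS2 K m *
        ∏ j : Fin m, ((1 - MvPowerSeries.X j) * (1 - MvPowerSeries.X j ^ 2)) =
      ∑ i ∈ Finset.range (m / 2 + 1),
        ∑ S ∈ Finset.univ.powersetCard (2 * i), ∏ j ∈ S, MvPowerSeries.X j := by
  have hser : (hilbertSeriesS2 K m + hilbertSeriesS2 K m) *
      (∏ j : Fin m, ((1 - MvPowerSeries.X j) * (1 - MvPowerSeries.X j ^ 2))) =
      (∑ i ∈ Finset.range (m / 2 + 1),
        ∑ S ∈ Finset.univ.powersetCard (2 * i), ∏ j ∈ S, MvPowerSeries.X j) +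
      (∑ i ∈ Finset.range (m / 2 + 1),
        ∑ S ∈ Finset.univ.powersetCard (2 * i), ∏ j ∈ S, MvPowerSeries.X j) := by
    rw [← hAB K m, add_mul, Aser_main, Bser_main, sum_prod_identity, two_mul]
  rw [add_mul] at hser
  apply MvPowerSeries.ext
  intro γ
  have := congrArg (MvPowerSeries.coeff γ) hser
  rw [map_add, map_add] at this
  linarith
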